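/- Let X be a pointed, oriented, closed, connected manifold, Ξ a set of DG Morse data on X with Barraud–Cornea twisting cocycle m, and let φ : (𝓐, ν^𝓐) → (𝓑, ν^𝓑) be a morphism of A∞-modules over C_*(ΩX). Then the map φ̃ = Σ_{n≥0} (φ_{n+1} ⊗ 1) ∘ m̃^n : C_*(X, Ξ, 𝓐) → C_*(X, Ξ, 𝓑) is a morphism of chain complexes, i.e. ∂ ∘ φ̃ = φ̃ ∘ ∂ for the twisted differentials ∂ = Σ_{n≥0} (ν_{n+1} ⊗ 1) ∘ m̃^n on each side. -/

import Mathlib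

/-!
## Abstract framework for Morse theory with DG and `A∞` coefficients

Following Barraud–Cornea and Barraud–Damian–Humilière–Oancea (BDHO):

* The cubical chain algebra `C_*(ΩX)` of the Moore loop space of a pointed, oriented,
  closed, connected manifold `X` (with the Pontryagin product) is abstracted as a
  connective, unital differential graded algebra `DGA` over `ℤ`.
* The set of critical points of a Morse function on `X`, together with the Morse index,
  is abstracted as a finite type `σ` equipped with an index function `ind : σ → ℤ`.
* Twisting cocycles, `A∞`-modules over `C_*(ΩX)`, enriched Morse complexes,
  continuation cocycles and the associated maps are encoded exactly by the formulas of
  the paper, with explicit Koszul signs.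
-/

noncomputable section

namespace CSDG

/-- A connective, unital differential graded algebra over `ℤ`, modelling the cubical
chains `C_*(ΩX)` on the Moore loop space of a pointed manifold under the Pontryagin
product. -/
structure DGA (A : Type) [AddCommGroup A] : Type where
  grade : ℤ → Submodule ℤ A
  internal : DirectSum.IsInternal grade
  grade_neg : ∀ i : ℤ, i < 0 → grade i = ⊥
  one : A
  one_mem : one ∈ grade 0
  d : A →ₗ[ℤ] A
  mul : A →ₗ[ℤ] A →ₗ[ℤ] A
  d_mem : ∀ (i : ℤ), ∀ a ∈ grade i, d a ∈ grade (i - 1)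
  mul_mem : ∀ (i j : ℤ), ∀ a ∈ grade i, ∀ b ∈ grade j, mul a b ∈ grade (i + j)
  d_d : ∀ a, d (d a) = 0
  mul_assoc' : ∀ a b c, mul (mul a b) c = mul a (mul b c)
  one_mul' : ∀ a, mul one a = a
  mul_one' : ∀ a, mul a one = a
  d_one : d one = 0
  leibniz : ∀ (i : ℤ), ∀ a ∈ grade i, ∀ b,
    d (mul a b) = mul (d a) b + ((Int.negOnePow i : ℤˣ) : ℤ) • mul a (d b)

variable {A M N : Type} [AddCommGroup A] [AddCommGroup M] [AddCommGroup N]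

/-- The first `j` entries of a tuple of `n` elements. -/
def firstSeg {α : Type} {n : ℕ} (γ : Fin n → α) (j : Fin (n + 1)) : Fin (j : ℕ) → α :=
  fun i => γ ⟨(i : ℕ), by have hi := i.isLt; have hj := j.isLt; omega⟩

/-- The last `n - j` entries of a tuple of `n` elements. -/
def lastSeg {α : Type} {n : ℕ} (γ : Fin n → α) (j : Fin (n + 1)) : Fin (n - (j : ℕ)) → α :=
  fun i => γ ⟨(j : ℕ) + (i : ℕ), by have hi := i.isLt; omega⟩

/-- The tuple obtained from an `n`-tuple by multiplying the entries in positions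
`r` and `r+1` (0-indexed). -/
def mergeSeg (Ω : DGA A) {n : ℕ} (γ : Fin n → A) (r : Fin (n - 1)) : Fin (n - 1) → A :=
  fun i =>
    if (i : ℕ) < (r : ℕ) then γ ⟨(i : ℕ), by have := i.isLt; omega⟩
    else if (i : ℕ) = (r : ℕ) then
      Ω.mul (γ ⟨(r : ℕ), by have := r.isLt; omega⟩) (γ ⟨(r : ℕ) + 1, by have := r.isLt; omega⟩)
    else γ ⟨(i : ℕ) + 1, by have := i.isLt; omega⟩

/-- Koszul sign exponent `N + |α| + Σ_{i<r} |γ_i|` appearing in front of the term where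
`μ₁` is inserted in the `r`-th loop slot. -/
def muOneExp {n : ℕ} (a : ℤ) (g : Fin n → ℤ) (r : Fin n) : ℤ :=
  (n : ℤ) + a + ∑ i : Fin n, if (i : ℕ) < (r : ℕ) then g i else 0

/-- An `A∞`-module over the DGA `Ω` (thought of as `C_*(ΩX)`): an internally graded
abelian group with multilinear operations `ν k : M ⊗ Ω^{⊗ k} → M` of degree `k - 1`
(`ν k` is `ν_{k+1}` of the paper, and `ν 0` is the differential), satisfying the
`A∞`-module relations, written on homogeneous elements with Koszul signs. -/
structure AInfModule (Ω : DGA A) (M : Type) [AddCommGroup M] : Type where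
  grade : ℤ → Submodule ℤ M
  internal : DirectSum.IsInternal grade
  ν : (k : ℕ) → M →ₗ[ℤ] MultilinearMap ℤ (fun _ : Fin k => A) M
  ν_mem : ∀ (k : ℕ) (a : ℤ) (g : Fin k → ℤ) (α : M) (γ : Fin k → A),
      α ∈ grade a → (∀ i, γ i ∈ Ω.grade (g i)) →
      ν k α γ ∈ grade (a + (∑ i, g i) + ((k : ℤ) - 1))
  rel : ∀ (n : ℕ) (a : ℤ) (g : Fin n → ℤ) (α : M) (γ : Fin n → A),
      α ∈ grade a → (∀ i, γ i ∈ Ω.grade (g i)) →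
      (∑ j : Fin (n + 1),
          ((Int.negOnePow ((((j : ℕ) : ℤ) + 1) * ((n : ℤ) - ((j : ℕ) : ℤ))) : ℤˣ) : ℤ) •
            ν (n - (j : ℕ)) (ν (j : ℕ) α (firstSeg γ j)) (lastSeg γ j))
        + (∑ r : Fin n, ((Int.negOnePow (muOneExp a g r) : ℤˣ) : ℤ) •
            ν n α (Function.update γ r (Ω.d (γ r))))
        + (∑ r : Fin (n - 1), ((Int.negOnePow (((r : ℕ) : ℤ) + 1) : ℤˣ) : ℤ) •
            ν (n - 1) α (mergeSeg Ω γ r)) = 0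

/-- A morphism of `A∞`-modules over the DGA `Ω`: a family of multilinear maps
`φ k : M ⊗ Ω^{⊗ k} → N` of degree `k` (`φ k` is `φ_{k+1}` of the paper) satisfying
the `A∞`-morphism relations, written on homogeneous elements with Koszul signs. -/
structure AInfMorphism (Ω : DGA A) (𝓐 : AInfModule Ω M) (𝓑 : AInfModule Ω N) : Type where
  φ : (k : ℕ) → M →ₗ[ℤ] MultilinearMap ℤ (fun _ : Fin k => A) N
  φ_mem : ∀ (k : ℕ) (a : ℤ) (g : Fin k → ℤ) (α : M) (γ : Fin k → A),
      α ∈ 𝓐.grade a → (∀ i, γ i ∈ Ω.grade (g i)) →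
      φ k α γ ∈ 𝓑.grade (a + (∑ i, g i) + (k : ℤ))
  rel : ∀ (n : ℕ) (a : ℤ) (g : Fin n → ℤ) (α : M) (γ : Fin n → A),
      α ∈ 𝓐.grade a → (∀ i, γ i ∈ Ω.grade (g i)) →
      (∑ j : Fin (n + 1),
          ((Int.negOnePow (((n : ℤ) - ((j : ℕ) : ℤ)) * (((j : ℕ) : ℤ) + 1)) : ℤˣ) : ℤ) •
            φ (n - (j : ℕ)) (𝓐.ν (j : ℕ) α (firstSeg γ j)) (lastSeg γ j))
        + (∑ r : Fin n, ((Int.negOnePow (muOneExp a g r) : ℤˣ) : ℤ) •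
            φ n α (Function.update γ r (Ω.d (γ r))))
        + (∑ r : Fin (n - 1), ((Int.negOnePow (((r : ℕ) : ℤ) + 1) : ℤˣ) : ℤ) •
            φ (n - 1) α (mergeSeg Ω γ r))
      = ∑ j : Fin (n + 1),
          ((Int.negOnePow (((n : ℤ) - ((j : ℕ) : ℤ)) * ((j : ℕ) : ℤ)) : ℤˣ) : ℤ) •
            𝓑.ν (n - (j : ℕ)) (φ (j : ℕ) α (firstSeg γ j)) (lastSeg γ j)

/-- A twisting cocycle over a Morse function, i.e. a family
`m x y ∈ C_{|x|-|y|-1}(ΩX)` indexed by pairs of critical points, satisfying the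
Maurer–Cartan equation. -/
structure Twisting (Ω : DGA A) (σ : Type) [Fintype σ] (ind : σ → ℤ) : Type where
  m : σ → σ → A
  mem : ∀ x y, m x y ∈ Ω.grade (ind x - ind y - 1)
  maurer_cartan : ∀ x y,
    Ω.d (m x y) =
      ∑ z : σ, ((Int.negOnePow (ind x - ind z) : ℤˣ) : ℤ) • Ω.mul (m x z) (m z y)

section Enriched

variable {σ : Type} [Fintype σ] [DecidableEq σ] {ind : σ → ℤ}

/-- Nodes preceding each step in a chain of Morse trajectories starting at `x`. -/
def prevNode (x : σ) {n : ℕ} (z : Fin n → σ) (i : Fin n) : σ :=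
  if (i : ℕ) = 0 then x else z ⟨(i : ℕ) - 1, by have := i.isLt; omega⟩

/-- The last node of a chain starting at `x` (which is `x` itself if the chain is empty). -/
def lastNode (x : σ) {n : ℕ} (z : Fin n → σ) : σ :=
  if h : n = 0 then x else z ⟨n - 1, by omega⟩

/-- The tuple of loop-space chains `m_{x,z₁} ⊗ m_{z₁,z₂} ⊗ ⋯` along a chain of critical
points. -/
def chainLoops {Ω : DGA A} (T : Twisting Ω σ ind) (x : σ) {n : ℕ} (z : Fin n → σ) :
    Fin n → A :=
  fun i => T.m (prevNode x z i) (z i)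

/-- The total Koszul sign exponent produced by the `n`-fold application of the degree `-1`
operator `m̃` to `α ⊗ x`, for `α` of degree `a`. -/
def chainExp (ind : σ → ℤ) (a : ℤ) (x : σ) {n : ℕ} (z : Fin n → σ) : ℤ :=
  (n : ℤ) * a + ∑ i : Fin n,
    ((n : ℤ) - 1 - ((i : ℕ) : ℤ)) * (ind (prevNode x z i) - ind (z i) - 1)

/-- The value on the homogeneous generator `α ⊗ x` (with `α` of degree `a`) of the
twisted differential `∂ = Σ_{n≥0} (ν_{n+1} ⊗ 1) m̃ⁿ` of the enriched Morse complex
`C_*(X, m, 𝓕) = 𝓕 ⊗ ℤ⟨Crit f⟩`.  The sum over `n` is finite because `m̃` strictly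
decreases the Morse index, and is truncated (exactly) at the number of critical
points. -/
def enrichedDSingle {Ω : DGA A} (𝓕 : AInfModule Ω M) (T : Twisting Ω σ ind)
    (a : ℤ) (α : M) (x : σ) : σ → M :=
  ∑ n ∈ Finset.range (Fintype.card σ + 1), ∑ z : Fin n → σ,
    Pi.single (lastNode x z)
      (((Int.negOnePow (chainExp ind a x z) : ℤˣ) : ℤ) • 𝓕.ν n α (chainLoops T x z))

/-- The grading of the enriched Morse complex `𝓕 ⊗ ℤ⟨Crit f⟩`:
`(𝓕 ⊗ ℤ⟨Crit f⟩)_k = ⊕_x 𝓕_{k - |x|}`. -/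
def enrGrade (gr : ℤ → Submodule ℤ M) (ind : σ → ℤ) (k : ℤ) : Submodule ℤ (σ → M) :=
  Submodule.pi Set.univ fun x => gr (k - ind x)

end Enriched

end CSDG
namespace CSDG

variable {A M N : Type} [AddCommGroup A] [AddCommGroup M] [AddCommGroup N]
variable {σ : Type} [Fintype σ] [DecidableEq σ] {ind : σ → ℤ}

/-- Value on the homogeneous generator `α ⊗ x` (with `α` of degree `a`) of the map
`φ̃ = Σ_{n≥0} (φ_{n+1} ⊗ 1) m̃ⁿ` induced by a morphism of `A∞`-modules `φ`. -/
def inducedSingle {Ω : DGA A} {𝓐 : AInfModule Ω M} {𝓑 : AInfModule Ω N}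
    (φ : AInfMorphism Ω 𝓐 𝓑) (T : Twisting Ω σ ind) (a : ℤ) (α : M) (x : σ) : σ → N :=
  ∑ n ∈ Finset.range (Fintype.card σ + 1), ∑ z : Fin n → σ,
    Pi.single (lastNode x z)
      (((Int.negOnePow (chainExp ind a x z) : ℤˣ) : ℤ) • φ.φ n α (chainLoops T x z))

end CSDG


namespace CSDGProof
set_option linter.unusedSectionVars false
open Finset CSDG



/-- Sign as an integer. -/
def sg (e : ℤ) : ℤ := ((Int.negOnePow e : ℤˣ) : ℤ)

lemma sg_add (a b : ℤ) : sg (a + b) = sg a * sg b := by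
  simp [sg, Int.negOnePow_add]

lemma sg_even_sub {a b : ℤ} (h : Even (a - b)) : sg a = sg b := by
  have : a = b + (a - b) := by ring
  rw [this, sg_add]
  simp [sg, Int.negOnePow_even _ h]

lemma sg_odd_sub {a b : ℤ} (h : Odd (a - b)) : sg a = -sg b := by
  have : a = b + (a - b) := by ring
  rw [this, sg_add]
  simp [sg, Int.negOnePow_odd _ h]

lemma tele1 (u : ℕ → ℤ) (n : ℕ) :
    ∑ i ∈ range n, (u i - u (i + 1) - 1) = u 0 - u n - n := by
  induction n with
  | zero => simp
  | succ n ih => rw [sum_range_succ, ih]; push_cast; ring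

lemma tele2 (u : ℕ → ℤ) (n : ℕ) :
    ∑ i ∈ range n, ((n : ℤ) - 1 - i) * (u i - u (i + 1) - 1)
      = -(∑ i ∈ range n, (i : ℤ)) + ∑ i ∈ range n, (u 0 - u i) := by
  induction n with
  | zero => simp
  | succ n ih =>
    have h1 : ∀ i ∈ range n, ((↑(n + 1) : ℤ) - 1 - i) * (u i - u (i + 1) - 1)
        = ((n : ℤ) - 1 - i) * (u i - u (i + 1) - 1) + (u i - u (i + 1) - 1) := by
      intro i _; push_cast; ring
    rw [sum_range_succ, sum_congr rfl h1, sum_add_distrib, ih, tele1,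
      sum_range_succ (fun i => (i : ℤ)), sum_range_succ (fun i => u 0 - u i)]
    push_cast; ring

lemma sum_sq_eq_antidiag {β : Type*} [AddCommMonoid β] (L : ℕ) (f : ℕ × ℕ → β)
    (hf : ∀ p : ℕ × ℕ, L ≤ p.1 ∨ L ≤ p.2 → f p = 0) :
    ∑ n ∈ range L, ∑ k ∈ range L, f (n, k)
      = ∑ l ∈ range (2 * L), ∑ j ∈ range (l + 1), f (j, l - j) := by
  have h1 : ∀ l, ∑ j ∈ range (l + 1), f (j, l - j) = ∑ p ∈ Finset.HasAntidiagonal.antidiagonal l, f p :=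
    fun l => (Finset.Nat.sum_antidiagonal_eq_sum_range_succ_mk f l).symm
  have hdisj : (↑(range (2 * L)) : Set ℕ).PairwiseDisjoint
      (fun l => (Finset.HasAntidiagonal.antidiagonal l : Finset (ℕ × ℕ))) := by
    intro i _ j _ hij
    simp only [Finset.disjoint_left]
    intro p hp hq
    rw [Finset.HasAntidiagonal.mem_antidiagonal] at hp hq
    omega
  have hsub : range L ×ˢ range L ⊆ (range (2 * L)).biUnion Finset.HasAntidiagonal.antidiagonal := by
    intro p hp
    rw [Finset.mem_product, Finset.mem_range, Finset.mem_range] at hp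
    rw [Finset.mem_biUnion]
    exact ⟨p.1 + p.2, Finset.mem_range.mpr (by omega), by
      rw [Finset.HasAntidiagonal.mem_antidiagonal]⟩
  calc ∑ n ∈ range L, ∑ k ∈ range L, f (n, k)
      = ∑ p ∈ range L ×ˢ range L, f p := (sum_product _ _ _).symm
    _ = ∑ p ∈ (range (2 * L)).biUnion Finset.HasAntidiagonal.antidiagonal, f p := by
        refine sum_subset hsub fun p _ hp => hf p ?_
        rw [Finset.mem_product, Finset.mem_range, Finset.mem_range] at hp
        omega
    _ = ∑ l ∈ range (2 * L), ∑ p ∈ Finset.HasAntidiagonal.antidiagonal l, f p := sum_biUnion hdisj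
    _ = _ := by simp only [h1]


lemma tele1_prefix (v : ℕ → ℤ) (r n : ℕ) (hr : r ≤ n) :
    ∑ i ∈ range n, (if i < r then v i - v (i + 1) - 1 else 0) = v 0 - v r - r := by
  rw [show n = r + (n - r) by omega, sum_range_add]
  rw [sum_congr rfl (fun i hi => if_pos (mem_range.mp hi)), tele1]
  have h2 : ∀ i ∈ range (n - r), (if r + i < r then v (r + i) - v (r + i + 1) - 1 else 0) = 0 :=
    fun i _ => if_neg (by omega)
  rw [sum_congr rfl h2]
  simp

lemma tri_add (n k : ℕ) : ∑ i ∈ range (n + k), (i : ℤ)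
    = (∑ i ∈ range n, (i : ℤ)) + (∑ i ∈ range k, (i : ℤ)) + (k : ℤ) * n := by
  rw [sum_range_add]
  have : ∀ i ∈ range k, ((n + i : ℕ) : ℤ) = (n : ℤ) + i := fun i _ => by push_cast; ring
  rw [sum_congr rfl this, sum_add_distrib]
  simp only [sum_const, card_range, nsmul_eq_mul]
  ring

/-- Sum over a range with one point inserted. -/
lemma sum_range_insert_pt (v v' : ℕ → ℤ) (l r : ℕ) (hr : r < l)
    (h1 : ∀ i ≤ r, v' i = v i) (h2 : ∀ i, r + 2 ≤ i → i ≤ l → v' i = v (i - 1)) :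
    ∑ i ∈ range (l + 1), v' i = (∑ i ∈ range l, v i) + v' (r + 1) := by
  obtain ⟨d, rfl⟩ : ∃ d, l = r + 1 + d := ⟨l - r - 1, by omega⟩
  have e1 : ∀ i ∈ range (r + 1), v' i = v i := fun i hi => h1 i (by
    have := mem_range.mp hi; omega)
  rw [show r + 1 + d + 1 = (r + 1) + (d + 1) by omega, sum_range_add v' (r + 1) (d + 1),
    show r + 1 + d = (r + 1) + d by omega, sum_range_add v (r + 1) d, sum_congr rfl e1]
  have e2 : ∑ i ∈ range (d + 1), v' (r + 1 + i)
      = v' (r + 1) + ∑ i ∈ range d, v (r + 1 + i) := by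
    rw [show d + 1 = 1 + d by omega, sum_range_add (fun i => v' (r + 1 + i)) 1 d]
    congr 1
    · simp
    · refine sum_congr rfl fun i hi => ?_
      have hi' := mem_range.mp hi
      rw [show r + 1 + (1 + i) = (r + 1 + i) + 1 by omega, h2 _ (by omega) (by omega)]
      congr 1
  rw [e2]
  ring



section Chains

variable {A M N : Type} [AddCommGroup A] [AddCommGroup M] [AddCommGroup N]
variable {σ : Type} [Fintype σ] [DecidableEq σ] {ind : σ → ℤ}

/-- The `i`-th node of the chain starting at `x` with steps `c`. -/
def node (x : σ) {n : ℕ} (c : Fin n → σ) : ℕ → σ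
  | 0 => x
  | i + 1 => if h : i < n then c ⟨i, h⟩ else x

lemma node_zero (x : σ) {n : ℕ} (c : Fin n → σ) : node x c 0 = x := rfl

lemma node_succ (x : σ) {n : ℕ} (c : Fin n → σ) (i : ℕ) (h : i < n) :
    node x c (i + 1) = c ⟨i, h⟩ := by simp [node, h]

lemma prevNode_eq (x : σ) {n : ℕ} (c : Fin n → σ) (i : Fin n) :
    prevNode x c i = node x c i := by
  rcases i with ⟨i, hi⟩
  cases i with
  | zero => rfl
  | succ j => simp [prevNode, node, Nat.lt_of_succ_lt hi]

lemma chainLoops_eq {Ω : DGA A} (T : Twisting Ω σ ind) (x : σ) {n : ℕ} (c : Fin n → σ)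
    (i : Fin n) : chainLoops T x c i = T.m (node x c i) (node x c ((i : ℕ) + 1)) := by
  rw [chainLoops, prevNode_eq, node_succ x c i i.isLt]

lemma lastNode_eq (x : σ) {n : ℕ} (c : Fin n → σ) : lastNode x c = node x c n := by
  cases n with
  | zero => rfl
  | succ m => simp [lastNode, node]

lemma chainExp_eq (ind : σ → ℤ) (a : ℤ) (x : σ) {n : ℕ} (c : Fin n → σ) :
    chainExp ind a x c = (n : ℤ) * a + ∑ i ∈ range n,
      ((n : ℤ) - 1 - i) * (ind (node x c i) - ind (node x c (i + 1)) - 1) := by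
  rw [chainExp]
  congr 1
  rw [← Fin.sum_univ_eq_sum_range
    (fun i => ((n : ℤ) - 1 - i) * (ind (node x c i) - ind (node x c (i + 1)) - 1)) n]
  refine Finset.sum_congr rfl fun i _ => ?_
  rw [prevNode_eq, node_succ x c i i.isLt]

/-- Closed form for the chain sign exponent. -/
lemma chainExp_closed (ind : σ → ℤ) (a : ℤ) (x : σ) {n : ℕ} (c : Fin n → σ) :
    chainExp ind a x c = (n : ℤ) * a - (∑ i ∈ range n, (i : ℤ))
      + ∑ i ∈ range n, (ind x - ind (node x c i)) := by
  rw [chainExp_eq, tele2 (fun i => ind (node x c i)) n]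
  simp only [node_zero]
  ring

lemma chainExp_deg (ind : σ → ℤ) (a d : ℤ) (x : σ) {n : ℕ} (c : Fin n → σ) :
    chainExp ind (a + d) x c = chainExp ind a x c + (n : ℤ) * d := by
  simp only [chainExp]; ring

/-- Telescoped total degree of the loops along a chain. -/
lemma sum_gdeg (ind : σ → ℤ) (x : σ) {n : ℕ} (c : Fin n → σ) :
    ∑ i : Fin n, (ind (prevNode x c i) - ind (c i) - 1)
      = ind x - ind (node x c n) - n := by
  have h2 : ∑ i : Fin n, (ind (prevNode x c i) - ind (c i) - 1)
      = ∑ i ∈ range n, (ind (node x c i) - ind (node x c (i + 1)) - 1) := by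
    rw [← Fin.sum_univ_eq_sum_range (fun j => ind (node x c j) - ind (node x c (j + 1)) - 1) n]
    refine Finset.sum_congr rfl fun i _ => ?_
    rw [prevNode_eq]
    show _ = ind (node x c (i : ℕ)) - ind (node x c ((i : ℕ) + 1)) - 1
    rw [node_succ x c i i.isLt]
  rw [h2, tele1 (fun j => ind (node x c j)) n, node_zero]

/-- Telescoped prefix degree sum, as in `muOneExp`. -/
lemma sum_gdeg_prefix (ind : σ → ℤ) (x : σ) {n : ℕ} (c : Fin n → σ) (r : ℕ) (hr : r ≤ n) :
    ∑ i : Fin n, (if (i : ℕ) < r then ind (prevNode x c i) - ind (c i) - 1 else 0)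
      = ind x - ind (node x c r) - r := by
  have h2 : ∑ i : Fin n, (if (i : ℕ) < r then ind (prevNode x c i) - ind (c i) - 1 else 0)
      = ∑ i ∈ range n, (if i < r then ind (node x c i) - ind (node x c (i + 1)) - 1 else 0) := by
    rw [← Fin.sum_univ_eq_sum_range
      (fun j => if j < r then ind (node x c j) - ind (node x c (j + 1)) - 1 else 0) n]
    refine Finset.sum_congr rfl fun i _ => ?_
    show _ = if (i : ℕ) < r then ind (node x c (i : ℕ)) - ind (node x c ((i : ℕ) + 1)) - 1 else 0
    by_cases h : (i : ℕ) < r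
    · simp only [h, if_true]
      rw [prevNode_eq, node_succ x c i i.isLt]
    · simp [h]
  rw [h2, tele1_prefix (fun j => ind (node x c j)) r n hr, node_zero]

/-! ### Concatenation of chains -/

lemma fin_congr {n : ℕ} {β : Type} (c : Fin n → β) {a b : ℕ} (pa : a < n) (pb : b < n)
    (h : a = b) : c ⟨a, pa⟩ = c ⟨b, pb⟩ := by subst h; rfl

/-- Concatenation of two chains. -/
def appendC {n k : ℕ} (z : Fin n → σ) (w : Fin k → σ) : Fin (n + k) → σ :=
  fun i => if h : (i : ℕ) < n then z ⟨i, h⟩ else w ⟨(i : ℕ) - n, by omega⟩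

/-- The equivalence splitting a chain of length `n + k`. -/
def appendEquiv (n k : ℕ) : ((Fin n → σ) × (Fin k → σ)) ≃ (Fin (n + k) → σ) where
  toFun p := appendC p.1 p.2
  invFun c := (fun i => c ⟨i, by omega⟩, fun i => c ⟨n + i, by omega⟩)
  left_inv p := by
    refine Prod.ext ?_ ?_ <;> funext i <;>
      simp only [appendC, Fin.val_mk]
    · rw [dif_pos i.isLt]
    · rw [dif_neg (by omega)]
      exact fin_congr p.2 _ _ (by omega)
  right_inv c := by
    funext i
    simp only [appendC, Fin.val_mk]
    by_cases h : (i : ℕ) < n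
    · rw [dif_pos h]
    · rw [dif_neg h]
      exact fin_congr c _ _ (by omega)

lemma node_appendC_left (x : σ) {n k : ℕ} (z : Fin n → σ) (w : Fin k → σ)
    (i : ℕ) (hi : i ≤ n) : node x (appendC z w) i = node x z i := by
  cases i with
  | zero => rfl
  | succ j =>
    rw [node_succ x _ j (by omega), node_succ x z j (by omega)]
    simp only [appendC, Fin.val_mk]
    rw [dif_pos (by omega)]

lemma node_appendC_right (x : σ) {n k : ℕ} (z : Fin n → σ) (w : Fin k → σ)
    (i : ℕ) (hi : i ≤ k) : node x (appendC z w) (n + i) = node (lastNode x z) w i := by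
  cases i with
  | zero =>
    rw [Nat.add_zero, node_appendC_left x z w n le_rfl, node_zero, lastNode_eq]
  | succ j =>
    rw [show n + (j + 1) = (n + j) + 1 by omega, node_succ x _ (n + j) (by omega),
      node_succ (lastNode x z) w j (by omega)]
    simp only [appendC, Fin.val_mk]
    rw [dif_neg (by omega)]
    exact fin_congr w _ _ (by omega)

lemma lastNode_appendC (x : σ) {n k : ℕ} (z : Fin n → σ) (w : Fin k → σ) :
    lastNode x (appendC z w) = lastNode (lastNode x z) w := by
  rw [lastNode_eq x (appendC z w), node_appendC_right x z w k le_rfl, ← lastNode_eq]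

/-- Exact sign bookkeeping for concatenation. -/
lemma chainExp_appendC (ind : σ → ℤ) (a : ℤ) (x : σ) {n k : ℕ}
    (z : Fin n → σ) (w : Fin k → σ) :
    chainExp ind a x z
        + chainExp ind (a + (∑ i : Fin n, (ind (prevNode x z i) - ind (z i) - 1)) + n)
            (lastNode x z) w
      = chainExp ind a x (appendC z w) + (k : ℤ) * n := by
  have hy : lastNode x z = node x z n := lastNode_eq x z
  have hb : a + (∑ i : Fin n, (ind (prevNode x z i) - ind (z i) - 1)) + (n : ℤ)
      = a + (ind x - ind (lastNode x z)) := by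
    rw [sum_gdeg, hy]; ring
  rw [hb, chainExp_deg ind a (ind x - ind (lastNode x z)) (lastNode x z) w]
  rw [chainExp_closed ind a x z, chainExp_closed ind a (lastNode x z) w,
    chainExp_closed ind a x (appendC z w)]
  have hsplit : ∑ i ∈ range (n + k), (ind x - ind (node x (appendC z w) i))
      = (∑ i ∈ range n, (ind x - ind (node x z i)))
        + ∑ i ∈ range k, (ind x - ind (node (lastNode x z) w i)) := by
    rw [sum_range_add (fun i => ind x - ind (node x (appendC z w) i)) n k]
    congr 1
    · refine Finset.sum_congr rfl fun i hi => ?_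
      rw [node_appendC_left x z w i (le_of_lt (mem_range.mp hi))]
    · refine Finset.sum_congr rfl fun i hi => ?_
      show ind x - ind (node x (appendC z w) (n + i)) = _
      rw [node_appendC_right x z w i (le_of_lt (mem_range.mp hi))]
  have hYX : ∑ i ∈ range k, (ind (lastNode x z) - ind (node (lastNode x z) w i))
      = (∑ i ∈ range k, (ind x - ind (node (lastNode x z) w i)))
        + (k : ℤ) * (ind (lastNode x z) - ind x) := by
    have h3 : ∀ i ∈ range k, ind (lastNode x z) - ind (node (lastNode x z) w i)
        = (ind x - ind (node (lastNode x z) w i)) + (ind (lastNode x z) - ind x) :=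
      fun i _ => by ring
    rw [Finset.sum_congr rfl h3, sum_add_distrib, sum_const, card_range, nsmul_eq_mul]
  rw [hsplit, hYX, tri_add n k]
  push_cast
  ring

/-! ### Insertion of a node into a chain -/

/-- Insert node `z` into the chain `c` before position `r`. -/
def insertC {n : ℕ} (c : Fin n → σ) (r : Fin n) (z : σ) : Fin (n + 1) → σ :=
  fun i =>
    if h : (i : ℕ) < (r : ℕ) then c ⟨i, by omega⟩
    else if h2 : (i : ℕ) = (r : ℕ) then z
    else c ⟨(i : ℕ) - 1, by omega⟩

/-- The insertion equivalence at a fixed position `r`. -/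
def insertEquiv {n : ℕ} (r : Fin n) : ((Fin n → σ) × σ) ≃ (Fin (n + 1) → σ) where
  toFun p := insertC p.1 r p.2
  invFun c := (fun i => if (i : ℕ) < (r : ℕ) then c ⟨i, by omega⟩ else c ⟨(i : ℕ) + 1, by omega⟩,
    c ⟨r, by omega⟩)
  left_inv p := by
    refine Prod.ext ?_ ?_
    · funext i
      simp only [insertC, Fin.val_mk]
      by_cases h : (i : ℕ) < (r : ℕ)
      · rw [if_pos h, dif_pos h]
      · rw [if_neg h, dif_neg (by omega), dif_neg (by omega)]
        exact fin_congr p.1 _ _ (by omega)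
    · show (insertC p.1 r p.2) ⟨r, by omega⟩ = p.2
      simp only [insertC, Fin.val_mk]
      rw [dif_neg (by omega)]
      simp
  right_inv c := by
    funext i
    simp only [insertC, Fin.val_mk]
    by_cases h : (i : ℕ) < (r : ℕ)
    · rw [dif_pos h, if_pos h]
    · rw [dif_neg h]
      by_cases h2 : (i : ℕ) = (r : ℕ)
      · rw [dif_pos h2]
        exact fin_congr c _ _ h2.symm
      · rw [dif_neg h2]
        rw [if_neg (by omega)]
        exact fin_congr c _ _ (by omega)

lemma node_insertC_le (x : σ) {n : ℕ} (c : Fin n → σ) (r : Fin n) (z : σ)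
    (i : ℕ) (hi : i ≤ (r : ℕ)) : node x (insertC c r z) i = node x c i := by
  cases i with
  | zero => rfl
  | succ j =>
    rw [node_succ x _ j (by omega), node_succ x c j (by omega)]
    simp only [insertC, Fin.val_mk]
    rw [dif_pos (by omega)]

lemma node_insertC_mid (x : σ) {n : ℕ} (c : Fin n → σ) (r : Fin n) (z : σ) :
    node x (insertC c r z) ((r : ℕ) + 1) = z := by
  rw [node_succ x _ r (by omega)]
  simp only [insertC, Fin.val_mk]
  rw [dif_neg (by omega)]
  simp

lemma node_insertC_gt (x : σ) {n : ℕ} (c : Fin n → σ) (r : Fin n) (z : σ)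
    (i : ℕ) (h1 : (r : ℕ) + 2 ≤ i) (h2 : i ≤ n + 1) :
    node x (insertC c r z) i = node x c (i - 1) := by
  obtain ⟨j, rfl⟩ : ∃ j, i = j + 1 := ⟨i - 1, by omega⟩
  rw [node_succ x _ j (by omega), show j + 1 - 1 = (j - 1) + 1 by omega,
    node_succ x c (j - 1) (by omega)]
  simp only [insertC, Fin.val_mk]
  rw [dif_neg (by omega), dif_neg (by omega)]

lemma lastNode_insertC (x : σ) {n : ℕ} (c : Fin n → σ) (r : Fin n) (z : σ) :
    lastNode x (insertC c r z) = lastNode x c := by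
  rw [lastNode_eq, lastNode_eq, node_insertC_gt x c r z (n + 1) (by omega) le_rfl]
  congr 1

/-- Exact sign bookkeeping for insertion. -/
lemma chainExp_insertC (ind : σ → ℤ) (a : ℤ) (x : σ) {n : ℕ} (c : Fin n → σ)
    (r : Fin n) (z : σ) :
    chainExp ind a x (insertC c r z)
      = chainExp ind a x c + a + ind x - ind z - n := by
  rw [chainExp_closed ind a x (insertC c r z), chainExp_closed ind a x c]
  have hins : ∑ i ∈ range (n + 1), (ind x - ind (node x (insertC c r z) i))
      = (∑ i ∈ range n, (ind x - ind (node x c i))) + (ind x - ind z) := by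
    rw [sum_range_insert_pt (fun i => ind x - ind (node x c i))
      (fun i => ind x - ind (node x (insertC c r z) i)) n r r.isLt
      (fun i hi => by
        show ind x - ind (node x (insertC c r z) i) = ind x - ind (node x c i)
        rw [node_insertC_le x c r z i hi])
      (fun i hh1 hh2 => by
        show ind x - ind (node x (insertC c r z) i) = ind x - ind (node x c (i - 1))
        rw [node_insertC_gt x c r z i hh1 (by omega)])]
    show _ + (ind x - ind (node x (insertC c r z) ((r : ℕ) + 1))) = _
    rw [node_insertC_mid]
  rw [hins, sum_range_succ (fun i => (i : ℤ)) n]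
  push_cast
  ring

/-! ### Vanishing of long chains -/

lemma m_zero_of_not_lt {Ω : DGA A} (T : Twisting Ω σ ind) (x y : σ)
    (h : ¬ ind y < ind x) : T.m x y = 0 := by
  have hm := T.mem x y
  rw [Ω.grade_neg (ind x - ind y - 1) (by omega)] at hm
  simpa using hm

lemma exists_zero_loop {Ω : DGA A} (T : Twisting Ω σ ind) (x : σ) {l : ℕ} (c : Fin l → σ)
    (s t : ℕ) (hst : s + Fintype.card σ ≤ t) (ht : t ≤ l) :
    ∃ i : Fin l, s ≤ (i : ℕ) ∧ (i : ℕ) < t ∧ chainLoops T x c i = 0 := by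
  by_contra hcon
  push_neg at hcon
  have step : ∀ j, s ≤ j → j < t → ind (node x c (j + 1)) < ind (node x c j) := by
    intro j hj1 hj2
    by_contra hlt
    have hz : T.m (node x c j) (node x c (j + 1)) = 0 := m_zero_of_not_lt T _ _ hlt
    have hne := hcon ⟨j, by omega⟩ hj1 hj2
    exact hne ((chainLoops_eq T x c ⟨j, by omega⟩).trans hz)
  have mono : ∀ d j, s ≤ j → j + d ≤ t → ind (node x c (j + d)) + (d : ℤ) ≤ ind (node x c j) := by
    intro d
    induction d with
    | zero => intro j _ _; simp
    | succ e ih =>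
      intro j hj hjd
      have h1 := ih j hj (by omega)
      have h2 := step (j + e) (by omega) (by omega)
      show ind (node x c ((j + e) + 1)) + ((e : ℤ) + 1) ≤ ind (node x c j)
      push_cast at h1
      omega
  have hinj : Function.Injective
      (fun j : Fin (Fintype.card σ + 1) => node x c (s + (j : ℕ))) := by
    intro j j' hEq
    by_contra hne
    have hvne : (j : ℕ) ≠ (j' : ℕ) := fun hv => hne (Fin.ext hv)
    rcases Nat.lt_or_ge (j : ℕ) (j' : ℕ) with hlt | hge
    · have hm := mono ((j' : ℕ) - (j : ℕ)) (s + (j : ℕ)) (by omega) (by omega)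
      rw [show s + (j : ℕ) + ((j' : ℕ) - (j : ℕ)) = s + (j' : ℕ) by omega] at hm
      have hEq' : node x c (s + (j : ℕ)) = node x c (s + (j' : ℕ)) := hEq
      rw [hEq'] at hm
      have : (1 : ℤ) ≤ (((j' : ℕ) - (j : ℕ) : ℕ) : ℤ) := by
        have : 1 ≤ (j' : ℕ) - (j : ℕ) := by omega
        exact_mod_cast this
      omega
    · have hlt' : (j' : ℕ) < (j : ℕ) := by omega
      have hm := mono ((j : ℕ) - (j' : ℕ)) (s + (j' : ℕ)) (by omega) (by omega)
      rw [show s + (j' : ℕ) + ((j : ℕ) - (j' : ℕ)) = s + (j : ℕ) by omega] at hm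
      have hEq' : node x c (s + (j : ℕ)) = node x c (s + (j' : ℕ)) := hEq
      rw [hEq'] at hm
      have : (1 : ℤ) ≤ (((j : ℕ) - (j' : ℕ) : ℕ) : ℤ) := by
        have : 1 ≤ (j : ℕ) - (j' : ℕ) := by omega
        exact_mod_cast this
      omega
  have hcard := Fintype.card_le_of_injective _ hinj
  simp only [Fintype.card_fin] at hcard
  omega

/-! ### Cast plumbing -/

lemma nu_cast {P Q : Type} [AddCommGroup P] [AddCommGroup Q]
    (f : (k : ℕ) → P →ₗ[ℤ] MultilinearMap ℤ (fun _ : Fin k => A) Q)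
    {k k' : ℕ} (h : k' = k) (β : P) (δ : Fin k' → A) (δ' : Fin k → A)
    (hδ : ∀ i : Fin k', δ i = δ' ⟨i, by omega⟩) : f k' β δ = f k β δ' := by
  subst h
  exact congrArg (f k' β) (funext fun i => hδ i)

lemma sum_chain_cast {β : Type} [AddCommMonoid β] {m l : ℕ} (h : m = l)
    (H : (m' : ℕ) → (Fin m' → σ) → β) :
    ∑ c : Fin m → σ, H m c = ∑ c : Fin l → σ, H l c := by subst h; rfl

/-- Reassembling a double sum over chain lengths into a sum over total length
and splitting position. -/
lemma assemble {β : Type} [AddCommGroup β] (L : ℕ)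
    (G : (l : ℕ) → (Fin l → σ) → Fin (l + 1) → β)
    (hG : ∀ (l : ℕ) (c : Fin l → σ) (j : Fin (l + 1)),
      L ≤ (j : ℕ) ∨ L ≤ l - (j : ℕ) → G l c j = 0) :
    ∑ n ∈ range L, ∑ k ∈ range L, ∑ c : Fin (n + k) → σ, G (n + k) c ⟨n, by omega⟩
      = ∑ l ∈ range (2 * L), ∑ c : Fin l → σ, ∑ j : Fin (l + 1), G l c j := by
  have main := sum_sq_eq_antidiag L
    (fun p : ℕ × ℕ => ∑ c : Fin (p.1 + p.2) → σ, G (p.1 + p.2) c ⟨p.1, by omega⟩)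
    (by
      intro p hp
      refine Finset.sum_eq_zero fun c _ => hG _ c _ ?_
      rcases hp with hp | hp
      · exact Or.inl hp
      · exact Or.inr (by simpa using hp))
  rw [main]
  refine Finset.sum_congr rfl fun l _ => ?_
  have hper : ∀ j ∈ range (l + 1),
      (∑ c : Fin (j + (l - j)) → σ, G (j + (l - j)) c ⟨j, by omega⟩)
        = ∑ c : Fin l → σ, (if h : j < l + 1 then G l c ⟨j, h⟩ else 0) := by
    intro j hj
    have hj' := mem_range.mp hj
    have hcast := sum_chain_cast (show j + (l - j) = l by omega)
      (fun m' (c : Fin m' → σ) => if h : j < m' + 1 then G m' c ⟨j, h⟩ else 0)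
    calc (∑ c : Fin (j + (l - j)) → σ, G (j + (l - j)) c ⟨j, by omega⟩)
        = ∑ c : Fin (j + (l - j)) → σ,
            (if h : j < (j + (l - j)) + 1 then G (j + (l - j)) c ⟨j, h⟩ else 0) := by
          refine Finset.sum_congr rfl fun c _ => ?_
          rw [dif_pos (by omega)]
      _ = ∑ c : Fin l → σ, (if h : j < l + 1 then G l c ⟨j, h⟩ else 0) := hcast
  rw [Finset.sum_congr rfl hper, Finset.sum_comm]
  refine Finset.sum_congr rfl fun c _ => ?_
  rw [← Fin.sum_univ_eq_sum_range (fun j => if h : j < l + 1 then G l c ⟨j, h⟩ else 0) (l + 1)]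
  refine Finset.sum_congr rfl fun j _ => ?_
  rw [dif_pos j.isLt]

/-! ### Merged loops of an inserted chain -/

lemma mergeSeg_insertC {Ω : DGA A} (T : Twisting Ω σ ind) (x : σ) {l : ℕ}
    (c : Fin l → σ) (r : Fin l) (z : σ) :
    mergeSeg Ω (chainLoops T x (insertC c r z)) ⟨(r : ℕ), by omega⟩
      = Function.update (chainLoops T x c) r
          (Ω.mul (T.m (node x c (r : ℕ)) z) (T.m z (node x c ((r : ℕ) + 1)))) := by
  funext i
  simp only [mergeSeg, Fin.val_mk]
  by_cases h1 : (i : ℕ) < (r : ℕ)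
  · rw [if_pos h1, Function.update_of_ne (Fin.ne_of_val_ne (by omega : (i : ℕ) ≠ (r : ℕ)))]
    rw [chainLoops_eq T x (insertC c r z), chainLoops_eq T x c]
    simp only [Fin.val_mk]
    rw [node_insertC_le x c r z _ (by omega), node_insertC_le x c r z _ (by omega)]
  · by_cases h2 : (i : ℕ) = (r : ℕ)
    · rw [if_neg h1, if_pos h2]
      have hir : i = r := Fin.ext h2
      rw [hir, Function.update_self]
      rw [chainLoops_eq T x (insertC c r z), chainLoops_eq T x (insertC c r z)]
      simp only [Fin.val_mk]
      rw [node_insertC_le x c r z _ le_rfl, node_insertC_mid x c r z,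
        node_insertC_gt x c r z _ (by omega) (by omega),
        show (r : ℕ) + 1 + 1 - 1 = (r : ℕ) + 1 from rfl]
    · rw [if_neg h1, if_neg h2,
        Function.update_of_ne (Fin.ne_of_val_ne (by omega : (i : ℕ) ≠ (r : ℕ)))]
      rw [chainLoops_eq T x (insertC c r z), chainLoops_eq T x c]
      simp only [Fin.val_mk]
      rw [node_insertC_gt x c r z _ (by omega) (by omega),
        node_insertC_gt x c r z _ (by omega) (by omega)]
      congr 2 <;> omega

end Chains
/-! ### The middle complexes -/

section Main

variable {A M N : Type} [AddCommGroup A] [AddCommGroup M] [AddCommGroup N]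
variable {σ : Type} [Fintype σ] [DecidableEq σ] {ind : σ → ℤ}
variable {Ω : DGA A}

/-- Degree shift accumulated along a chain. -/
def bdeg (ind : σ → ℤ) (a : ℤ) (x : σ) {n : ℕ} (z : Fin n → σ) : ℤ :=
  a + (∑ i : Fin n, (ind (prevNode x z i) - ind (z i) - 1)) + n

/-- Summand of `∂ ∘ φ̃` over a total chain `c` split at `j`. -/
def ML (T : Twisting Ω σ ind) {𝓐 : AInfModule Ω M} {𝓑 : AInfModule Ω N}
    (φ : AInfMorphism Ω 𝓐 𝓑) (a : ℤ) (α : M) (x : σ)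
    (l : ℕ) (c : Fin l → σ) (j : Fin (l + 1)) : σ → N :=
  Pi.single (lastNode x c)
    (sg (chainExp ind a x c + ((l : ℤ) - ((j : ℕ) : ℤ)) * ((j : ℕ) : ℤ)) •
      𝓑.ν (l - (j : ℕ)) (φ.φ (j : ℕ) α (firstSeg (chainLoops T x c) j))
        (lastSeg (chainLoops T x c) j))

/-- Summand of `φ̃ ∘ ∂` over a total chain `c` split at `j`. -/
def MR (T : Twisting Ω σ ind) {𝓐 : AInfModule Ω M} {𝓑 : AInfModule Ω N}
    (φ : AInfMorphism Ω 𝓐 𝓑) (a : ℤ) (α : M) (x : σ)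
    (l : ℕ) (c : Fin l → σ) (j : Fin (l + 1)) : σ → N :=
  Pi.single (lastNode x c)
    (sg (chainExp ind a x c + ((l : ℤ) - ((j : ℕ) : ℤ)) * (((j : ℕ) : ℤ) + 1)) •
      φ.φ (l - (j : ℕ)) (𝓐.ν (j : ℕ) α (firstSeg (chainLoops T x c) j))
        (lastSeg (chainLoops T x c) j))

/-- The `μ₁` error term. -/
def P1 (T : Twisting Ω σ ind) {𝓐 : AInfModule Ω M} {𝓑 : AInfModule Ω N}
    (φ : AInfMorphism Ω 𝓐 𝓑) (a : ℤ) (α : M) (x : σ)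
    (l : ℕ) (c : Fin l → σ) : σ → N :=
  Pi.single (lastNode x c)
    (sg (chainExp ind a x c) •
      ∑ r : Fin l,
        sg (muOneExp a (fun i => ind (prevNode x c i) - ind (c i) - 1) r) •
          φ.φ l α (Function.update (chainLoops T x c) r (Ω.d (chainLoops T x c r))))

/-- The `μ₂` error term. -/
def P2 (T : Twisting Ω σ ind) {𝓐 : AInfModule Ω M} {𝓑 : AInfModule Ω N}
    (φ : AInfMorphism Ω 𝓐 𝓑) (a : ℤ) (α : M) (x : σ)
    (l : ℕ) (c : Fin l → σ) : σ → N :=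
  Pi.single (lastNode x c)
    (sg (chainExp ind a x c) •
      ∑ r : Fin (l - 1),
        sg (((r : ℕ) : ℤ) + 1) • φ.φ (l - 1) α (mergeSeg Ω (chainLoops T x c) r))

variable (T : Twisting Ω σ ind) {𝓐 : AInfModule Ω M} {𝓑 : AInfModule Ω N}
  (φ : AInfMorphism Ω 𝓐 𝓑)

lemma ML_vanish (a : ℤ) (α : M) (x : σ) (l : ℕ) (c : Fin l → σ) (j : Fin (l + 1))
    (h : Fintype.card σ + 1 ≤ (j : ℕ) ∨ Fintype.card σ + 1 ≤ l - (j : ℕ)) :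
    ML T φ a α x l c j = 0 := by
  rcases h with h | h
  · obtain ⟨i, hi1, hi2, hz⟩ := exists_zero_loop T x c 0 (Fintype.card σ)
      (by omega) (by omega)
    have hfz : firstSeg (chainLoops T x c) j ⟨(i : ℕ), by omega⟩ = 0 := by
      show chainLoops T x c ⟨(i : ℕ), i.isLt⟩ = 0
      exact hz
    rw [ML, MultilinearMap.map_coord_zero _ _ hfz, map_zero,
      MultilinearMap.zero_apply, smul_zero, Pi.single_zero]
  · obtain ⟨i, hi1, hi2, hz⟩ := exists_zero_loop T x c (j : ℕ) ((j : ℕ) + Fintype.card σ)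
      (by omega) (by omega)
    have hlz : lastSeg (chainLoops T x c) j ⟨(i : ℕ) - (j : ℕ), by omega⟩ = 0 := by
      show chainLoops T x c ⟨(j : ℕ) + ((i : ℕ) - (j : ℕ)), by omega⟩ = 0
      exact (fin_congr (chainLoops T x c) (by omega) i.isLt (by omega)).trans hz
    rw [ML, MultilinearMap.map_coord_zero _ _ hlz, smul_zero, Pi.single_zero]

lemma MR_vanish (a : ℤ) (α : M) (x : σ) (l : ℕ) (c : Fin l → σ) (j : Fin (l + 1))
    (h : Fintype.card σ + 1 ≤ (j : ℕ) ∨ Fintype.card σ + 1 ≤ l - (j : ℕ)) :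
    MR T φ a α x l c j = 0 := by
  rcases h with h | h
  · obtain ⟨i, hi1, hi2, hz⟩ := exists_zero_loop T x c 0 (Fintype.card σ)
      (by omega) (by omega)
    have hfz : firstSeg (chainLoops T x c) j ⟨(i : ℕ), by omega⟩ = 0 := by
      show chainLoops T x c ⟨(i : ℕ), i.isLt⟩ = 0
      exact hz
    rw [MR, MultilinearMap.map_coord_zero _ _ hfz, map_zero,
      MultilinearMap.zero_apply, smul_zero, Pi.single_zero]
  · obtain ⟨i, hi1, hi2, hz⟩ := exists_zero_loop T x c (j : ℕ) ((j : ℕ) + Fintype.card σ)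
      (by omega) (by omega)
    have hlz : lastSeg (chainLoops T x c) j ⟨(i : ℕ) - (j : ℕ), by omega⟩ = 0 := by
      show chainLoops T x c ⟨(j : ℕ) + ((i : ℕ) - (j : ℕ)), by omega⟩ = 0
      exact (fin_congr (chainLoops T x c) (by omega) i.isLt (by omega)).trans hz
    rw [MR, MultilinearMap.map_coord_zero _ _ hlz, smul_zero, Pi.single_zero]

lemma mergeSeg_zero_slot {l : ℕ} (γ : Fin l → A) (r : Fin (l - 1)) (p : Fin l)
    (hp : γ p = 0) (h1 : (p : ℕ) ≠ (r : ℕ)) (h2 : (p : ℕ) ≠ (r : ℕ) + 1) :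
    ∃ q : Fin (l - 1), mergeSeg Ω γ r q = 0 := by
  by_cases hlt : (p : ℕ) < (r : ℕ)
  · refine ⟨⟨(p : ℕ), by omega⟩, ?_⟩
    simp only [mergeSeg, Fin.val_mk]
    rw [if_pos hlt]
    exact (fin_congr γ _ p.isLt rfl).trans hp
  · refine ⟨⟨(p : ℕ) - 1, by omega⟩, ?_⟩
    simp only [mergeSeg, Fin.val_mk]
    rw [if_neg (by omega), if_neg (by omega)]
    exact (fin_congr γ _ p.isLt (by omega)).trans hp

lemma P2_vanish_top (a : ℤ) (α : M) (x : σ)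
    (c : Fin (2 * (Fintype.card σ + 1)) → σ) :
    P2 T φ a α x (2 * (Fintype.card σ + 1)) c = 0 := by
  rw [P2]
  have hzero : ∀ r : Fin (2 * (Fintype.card σ + 1) - 1),
      sg (((r : ℕ) : ℤ) + 1) • φ.φ (2 * (Fintype.card σ + 1) - 1) α
        (mergeSeg Ω (chainLoops T x c) r) = 0 := by
    intro r
    obtain ⟨i1, hi11, hi12, hz1⟩ := exists_zero_loop T x c 0 (Fintype.card σ)
      (by omega) (by omega)
    obtain ⟨i2, hi21, hi22, hz2⟩ := exists_zero_loop T x c (Fintype.card σ + 1)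
      (2 * Fintype.card σ + 1) (by omega) (by omega)
    have hsep : (i1 : ℕ) + 2 ≤ (i2 : ℕ) := by omega
    by_cases hc : (i1 : ℕ) ≠ (r : ℕ) ∧ (i1 : ℕ) ≠ (r : ℕ) + 1
    · obtain ⟨q, hq⟩ := mergeSeg_zero_slot (chainLoops T x c) r i1 hz1 hc.1 hc.2
      rw [MultilinearMap.map_coord_zero _ _ hq, smul_zero]
    · have h1 : (i2 : ℕ) ≠ (r : ℕ) := by omega
      have h2 : (i2 : ℕ) ≠ (r : ℕ) + 1 := by omega
      obtain ⟨q, hq⟩ := mergeSeg_zero_slot (chainLoops T x c) r i2 hz2 h1 h2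
      rw [MultilinearMap.map_coord_zero _ _ hq, smul_zero]
  rw [Finset.sum_congr rfl fun r _ => hzero r]
  simp

lemma P2_zero_len (a : ℤ) (α : M) (x : σ) (c : Fin 0 → σ) :
    P2 T φ a α x 0 c = 0 := by
  rw [P2]
  rw [show (∑ r : Fin (0 - 1), sg (((r : ℕ) : ℤ) + 1) •
    φ.φ (0 - 1) α (mergeSeg Ω (chainLoops T x c) r)) = 0 from
    Finset.sum_eq_zero fun r _ => absurd r.isLt (by omega)]
  simp

end Main



section Expand

variable {A M N : Type} [AddCommGroup A] [AddCommGroup M] [AddCommGroup N]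
variable {σ : Type} [Fintype σ] [DecidableEq σ] {ind : σ → ℤ}
variable {Ω : DGA A}
variable (T : Twisting Ω σ ind) {𝓐 : AInfModule Ω M} {𝓑 : AInfModule Ω N}
  (φ : AInfMorphism Ω 𝓐 𝓑)

lemma sg_def (e : ℤ) : ((Int.negOnePow e : ℤˣ) : ℤ) = sg e := rfl

lemma Pi_single_sum {I : Type} [DecidableEq I] {β : I → Type} [∀ i, AddCommMonoid (β i)]
    (y : I) {γ : Type} (s : Finset γ) (f : γ → β y) :
    Pi.single y (∑ t ∈ s, f t) = ∑ t ∈ s, Pi.single y (f t) :=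
  map_sum (AddMonoidHom.single β y) f s

lemma ML_mk (a : ℤ) (α : M) (x : σ) (l : ℕ) (c : Fin l → σ) (jv : ℕ) (hj : jv < l + 1) :
    ML T φ a α x l c ⟨jv, hj⟩
      = Pi.single (lastNode x c)
          (sg (chainExp ind a x c + ((l : ℤ) - (jv : ℤ)) * (jv : ℤ)) •
            𝓑.ν (l - jv)
              (φ.φ jv α (fun i : Fin jv => chainLoops T x c ⟨(i : ℕ), by omega⟩))
              (fun i : Fin (l - jv) => chainLoops T x c ⟨jv + (i : ℕ), by omega⟩)) := rfl

lemma MR_mk (a : ℤ) (α : M) (x : σ) (l : ℕ) (c : Fin l → σ) (jv : ℕ) (hj : jv < l + 1) :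
    MR T φ a α x l c ⟨jv, hj⟩
      = Pi.single (lastNode x c)
          (sg (chainExp ind a x c + ((l : ℤ) - (jv : ℤ)) * ((jv : ℤ) + 1)) •
            φ.φ (l - jv)
              (𝓐.ν jv α (fun i : Fin jv => chainLoops T x c ⟨(i : ℕ), by omega⟩))
              (fun i : Fin (l - jv) => chainLoops T x c ⟨jv + (i : ℕ), by omega⟩)) := rfl

lemma expandLHS (DB : (σ → N) →+ (σ → N)) (F : (σ → M) →+ (σ → N))
    (hDB : ∀ (b : ℤ) (β : N) (y : σ), β ∈ 𝓑.grade b →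
      DB (Pi.single y β) = enrichedDSingle 𝓑 T b β y)
    (hF : ∀ (a : ℤ) (α : M) (x : σ), α ∈ 𝓐.grade a →
      F (Pi.single x α) = inducedSingle φ T a α x)
    (a : ℤ) (α : M) (x : σ) (hα : α ∈ 𝓐.grade a) :
    DB (F (Pi.single x α))
      = ∑ n ∈ range (Fintype.card σ + 1), ∑ z : Fin n → σ,
          ∑ k ∈ range (Fintype.card σ + 1), ∑ w : Fin k → σ,
            Pi.single (lastNode (lastNode x z) w)
              (sg (chainExp ind a x z
                  + chainExp ind (bdeg ind a x z) (lastNode x z) w) •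
                𝓑.ν k (φ.φ n α (chainLoops T x z)) (chainLoops T (lastNode x z) w)) := by
  rw [hF a α x hα, inducedSingle, map_sum]
  refine Finset.sum_congr rfl fun n _ => ?_
  rw [map_sum]
  refine Finset.sum_congr rfl fun z _ => ?_
  have hmem : φ.φ n α (chainLoops T x z) ∈ 𝓑.grade (bdeg ind a x z) :=
    φ.φ_mem n a (fun i => ind (prevNode x z i) - ind (z i) - 1) α (chainLoops T x z) hα
      (fun i => T.mem _ _)
  rw [Pi.single_smul, map_zsmul, hDB (bdeg ind a x z) _ _ hmem, enrichedDSingle,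
    Finset.smul_sum]
  refine Finset.sum_congr rfl fun k _ => ?_
  rw [Finset.smul_sum]
  refine Finset.sum_congr rfl fun w _ => ?_
  rw [← Pi.single_smul, smul_smul]
  simp only [sg_def]
  rw [← sg_add]

lemma expandRHS (DA : (σ → M) →+ (σ → M)) (F : (σ → M) →+ (σ → N))
    (hDA : ∀ (a : ℤ) (α : M) (x : σ), α ∈ 𝓐.grade a →
      DA (Pi.single x α) = enrichedDSingle 𝓐 T a α x)
    (hF : ∀ (a : ℤ) (α : M) (x : σ), α ∈ 𝓐.grade a →
      F (Pi.single x α) = inducedSingle φ T a α x)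
    (a : ℤ) (α : M) (x : σ) (hα : α ∈ 𝓐.grade a) :
    F (DA (Pi.single x α))
      = ∑ n ∈ range (Fintype.card σ + 1), ∑ z : Fin n → σ,
          ∑ k ∈ range (Fintype.card σ + 1), ∑ w : Fin k → σ,
            Pi.single (lastNode (lastNode x z) w)
              (sg (chainExp ind a x z
                  + chainExp ind (bdeg ind a x z - 1) (lastNode x z) w) •
                φ.φ k (𝓐.ν n α (chainLoops T x z)) (chainLoops T (lastNode x z) w)) := by
  rw [hDA a α x hα, enrichedDSingle, map_sum]
  refine Finset.sum_congr rfl fun n _ => ?_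
  rw [map_sum]
  refine Finset.sum_congr rfl fun z _ => ?_
  have hmem : 𝓐.ν n α (chainLoops T x z)
      ∈ 𝓐.grade (a + (∑ i : Fin n, (ind (prevNode x z i) - ind (z i) - 1)) + ((n : ℤ) - 1)) :=
    𝓐.ν_mem n a (fun i => ind (prevNode x z i) - ind (z i) - 1) α (chainLoops T x z) hα
      (fun i => T.mem _ _)
  have hdeg : a + (∑ i : Fin n, (ind (prevNode x z i) - ind (z i) - 1)) + ((n : ℤ) - 1)
      = bdeg ind a x z - 1 := by
    simp only [bdeg]; ring
  rw [Pi.single_smul, map_zsmul, hF _ _ _ hmem, hdeg, inducedSingle, Finset.smul_sum]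
  refine Finset.sum_congr rfl fun k _ => ?_
  rw [Finset.smul_sum]
  refine Finset.sum_congr rfl fun w _ => ?_
  rw [← Pi.single_smul, smul_smul]
  simp only [sg_def]
  rw [← sg_add]

lemma reindexL (a : ℤ) (α : M) (x : σ) (n k : ℕ) :
    (∑ z : Fin n → σ, ∑ w : Fin k → σ,
        Pi.single (lastNode (lastNode x z) w)
          (sg (chainExp ind a x z + chainExp ind (bdeg ind a x z) (lastNode x z) w) •
            𝓑.ν k (φ.φ n α (chainLoops T x z)) (chainLoops T (lastNode x z) w)))
      = ∑ c : Fin (n + k) → σ, ML T φ a α x (n + k) c ⟨n, by omega⟩ := by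
  rw [← Equiv.sum_comp (appendEquiv n k)
    (fun c => ML T φ a α x (n + k) c ⟨n, by omega⟩), Fintype.sum_prod_type]
  refine Finset.sum_congr rfl fun z _ => Finset.sum_congr rfl fun w _ => ?_
  show _ = ML T φ a α x (n + k) (appendC z w) ⟨n, by omega⟩
  rw [ML_mk]
  have hprefix : (fun i : Fin n => chainLoops T x (appendC z w) ⟨(i : ℕ), by omega⟩)
      = chainLoops T x z := by
    funext i
    rw [chainLoops_eq T x (appendC z w), chainLoops_eq T x z]
    simp only [Fin.val_mk]
    rw [node_appendC_left x z w (i : ℕ) (by omega),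
      node_appendC_left x z w ((i : ℕ) + 1) (by omega)]
  have hν : 𝓑.ν ((n + k) - n) (φ.φ n α (chainLoops T x z))
        (fun i : Fin ((n + k) - n) => chainLoops T x (appendC z w) ⟨n + (i : ℕ), by omega⟩)
      = 𝓑.ν k (φ.φ n α (chainLoops T x z)) (chainLoops T (lastNode x z) w) := by
    refine nu_cast 𝓑.ν (by omega) _ _ _ fun i => ?_
    rw [chainLoops_eq T x (appendC z w)]
    simp only [Fin.val_mk]
    rw [node_appendC_right x z w (i : ℕ) (by omega),
      show n + (i : ℕ) + 1 = n + ((i : ℕ) + 1) by omega,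
      node_appendC_right x z w ((i : ℕ) + 1) (by omega),
      ← chainLoops_eq T (lastNode x z) w ⟨(i : ℕ), by omega⟩]
  have hsg : sg (chainExp ind a x (appendC z w) + (((n + k : ℕ) : ℤ) - (n : ℤ)) * (n : ℤ))
      = sg (chainExp ind a x z + chainExp ind (bdeg ind a x z) (lastNode x z) w) := by
    congr 1
    have h := chainExp_appendC ind a x z w
    simp only [bdeg]
    push_cast at h ⊢
    linarith [h]
  rw [lastNode_appendC x z w, hprefix, hν, hsg]

lemma reindexR (a : ℤ) (α : M) (x : σ) (n k : ℕ) :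
    (∑ z : Fin n → σ, ∑ w : Fin k → σ,
        Pi.single (lastNode (lastNode x z) w)
          (sg (chainExp ind a x z + chainExp ind (bdeg ind a x z - 1) (lastNode x z) w) •
            φ.φ k (𝓐.ν n α (chainLoops T x z)) (chainLoops T (lastNode x z) w)))
      = ∑ c : Fin (n + k) → σ, MR T φ a α x (n + k) c ⟨n, by omega⟩ := by
  rw [← Equiv.sum_comp (appendEquiv n k)
    (fun c => MR T φ a α x (n + k) c ⟨n, by omega⟩), Fintype.sum_prod_type]
  refine Finset.sum_congr rfl fun z _ => Finset.sum_congr rfl fun w _ => ?_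
  show _ = MR T φ a α x (n + k) (appendC z w) ⟨n, by omega⟩
  rw [MR_mk]
  have hprefix : (fun i : Fin n => chainLoops T x (appendC z w) ⟨(i : ℕ), by omega⟩)
      = chainLoops T x z := by
    funext i
    rw [chainLoops_eq T x (appendC z w), chainLoops_eq T x z]
    simp only [Fin.val_mk]
    rw [node_appendC_left x z w (i : ℕ) (by omega),
      node_appendC_left x z w ((i : ℕ) + 1) (by omega)]
  have hν : φ.φ ((n + k) - n) (𝓐.ν n α (chainLoops T x z))
        (fun i : Fin ((n + k) - n) => chainLoops T x (appendC z w) ⟨n + (i : ℕ), by omega⟩)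
      = φ.φ k (𝓐.ν n α (chainLoops T x z)) (chainLoops T (lastNode x z) w) := by
    refine nu_cast φ.φ (by omega) _ _ _ fun i => ?_
    rw [chainLoops_eq T x (appendC z w)]
    simp only [Fin.val_mk]
    rw [node_appendC_right x z w (i : ℕ) (by omega),
      show n + (i : ℕ) + 1 = n + ((i : ℕ) + 1) by omega,
      node_appendC_right x z w ((i : ℕ) + 1) (by omega),
      ← chainLoops_eq T (lastNode x z) w ⟨(i : ℕ), by omega⟩]
  have hsg : sg (chainExp ind a x (appendC z w) + (((n + k : ℕ) : ℤ) - (n : ℤ)) * ((n : ℤ) + 1))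
      = sg (chainExp ind a x z + chainExp ind (bdeg ind a x z - 1) (lastNode x z) w) := by
    refine sg_even_sub ?_
    have h := chainExp_appendC ind a x z w
    have h2 : chainExp ind (bdeg ind a x z - 1) (lastNode x z) w
        = chainExp ind (bdeg ind a x z) (lastNode x z) w - (k : ℤ) := by
      have := chainExp_deg ind (bdeg ind a x z) (-1) (lastNode x z) w
      rw [show bdeg ind a x z + (-1) = bdeg ind a x z - 1 by ring] at this
      rw [this]; ring
    simp only [bdeg] at h h2 ⊢
    push_cast at h h2 ⊢
    refine ⟨(k : ℤ), by linarith [h, h2]⟩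
  rw [lastNode_appendC x z w, hprefix, hν, hsg]

end Expand


section Cancel

variable {A M N : Type} [AddCommGroup A] [AddCommGroup M] [AddCommGroup N]
variable {σ : Type} [Fintype σ] [DecidableEq σ] {ind : σ → ℤ}
variable {Ω : DGA A}

/-- The merged term indexed by an `(l+1)`-chain and a merge position. -/
def W (T : Twisting Ω σ ind) {𝓐 : AInfModule Ω M} {𝓑 : AInfModule Ω N}
    (φ : AInfMorphism Ω 𝓐 𝓑) (a : ℤ) (α : M) (x : σ)
    (l : ℕ) (r : Fin l) (c' : Fin (l + 1) → σ) : σ → N :=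
  Pi.single (lastNode x c')
    (sg (chainExp ind a x c' + (((r : ℕ) : ℤ) + 1)) •
      φ.φ l α (mergeSeg Ω (chainLoops T x c') ⟨(r : ℕ), by omega⟩))

variable (T : Twisting Ω σ ind) {𝓐 : AInfModule Ω M} {𝓑 : AInfModule Ω N}
  (φ : AInfMorphism Ω 𝓐 𝓑)

lemma relStep (a : ℤ) (α : M) (x : σ) (hα : α ∈ 𝓐.grade a) (l : ℕ) (c : Fin l → σ) :
    ∑ j : Fin (l + 1), ML T φ a α x l c j
      = (∑ j : Fin (l + 1), MR T φ a α x l c j)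
          + P1 T φ a α x l c + P2 T φ a α x l c := by
  have hγ : ∀ i : Fin l, chainLoops T x c i
      ∈ Ω.grade ((fun i : Fin l => ind (prevNode x c i) - ind (c i) - 1) i) :=
    fun i => T.mem _ _
  have hrel := φ.rel l a (fun i => ind (prevNode x c i) - ind (c i) - 1) α
    (chainLoops T x c) hα hγ
  simp only [sg_def] at hrel
  have hML : ∑ j : Fin (l + 1), ML T φ a α x l c j
      = Pi.single (lastNode x c) (sg (chainExp ind a x c) •
          ∑ j : Fin (l + 1),
            sg (((l : ℤ) - ((j : ℕ) : ℤ)) * ((j : ℕ) : ℤ)) •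
              𝓑.ν (l - (j : ℕ)) (φ.φ (j : ℕ) α (firstSeg (chainLoops T x c) j))
                (lastSeg (chainLoops T x c) j)) := by
    rw [Finset.smul_sum, Pi_single_sum]
    refine Finset.sum_congr rfl fun j _ => ?_
    rw [ML, sg_add, ← smul_smul]
  have hMR : ∑ j : Fin (l + 1), MR T φ a α x l c j
      = Pi.single (lastNode x c) (sg (chainExp ind a x c) •
          ∑ j : Fin (l + 1),
            sg (((l : ℤ) - ((j : ℕ) : ℤ)) * (((j : ℕ) : ℤ) + 1)) •
              φ.φ (l - (j : ℕ)) (𝓐.ν (j : ℕ) α (firstSeg (chainLoops T x c) j))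
                (lastSeg (chainLoops T x c) j)) := by
    rw [Finset.smul_sum, Pi_single_sum]
    refine Finset.sum_congr rfl fun j _ => ?_
    rw [MR, sg_add, ← smul_smul]
  rw [hML, hMR, P1, P2, ← Pi.single_add, ← Pi.single_add, ← smul_add, ← smul_add,
    hrel]

lemma insertStep (a : ℤ) (α : M) (x : σ) (l : ℕ) :
    ∑ c : Fin l → σ, P1 T φ a α x l c
      = - ∑ c' : Fin (l + 1) → σ, P2 T φ a α x (l + 1) c' := by
  have hP2 : ∀ c' : Fin (l + 1) → σ, P2 T φ a α x (l + 1) c'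
      = ∑ r : Fin l, W T φ a α x l r c' := by
    intro c'
    rw [P2, Finset.smul_sum, Pi_single_sum]
    refine Finset.sum_congr rfl fun r _ => ?_
    rw [W, smul_smul, ← sg_add]
    rfl
  have hP1 : ∀ c : Fin l → σ, P1 T φ a α x l c
      = ∑ r : Fin l, ∑ z : σ, -(W T φ a α x l r (insertC c r z)) := by
    intro c
    rw [P1, Finset.smul_sum, Pi_single_sum]
    refine Finset.sum_congr rfl fun r _ => ?_
    have hd : Ω.d (chainLoops T x c r)
        = ∑ z : σ, sg (ind (prevNode x c r) - ind z) •
            Ω.mul (T.m (prevNode x c r) z) (T.m z (c r)) := by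
      have h := T.maurer_cartan (prevNode x c r) (c r)
      simp only [sg_def] at h
      exact h
    rw [hd, MultilinearMap.map_update_sum,
      Finset.smul_sum, Finset.smul_sum, Pi_single_sum]
    refine Finset.sum_congr rfl fun z _ => ?_
    rw [MultilinearMap.map_update_smul]
    have hmerge : Function.update (chainLoops T x c) r
          (Ω.mul (T.m (prevNode x c r) z) (T.m z (c r)))
        = mergeSeg Ω (chainLoops T x (insertC c r z)) ⟨(r : ℕ), by omega⟩ := by
      rw [mergeSeg_insertC T x c r z, prevNode_eq,
        node_succ x c (r : ℕ) r.isLt]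
    rw [hmerge, W, lastNode_insertC x c r z, ← Pi.single_neg, ← neg_smul,
      smul_smul, smul_smul]
    have hodd : sg (chainExp ind a x c
          + muOneExp a (fun i => ind (prevNode x c i) - ind (c i) - 1) r
          + (ind (prevNode x c r) - ind z))
        = - sg (chainExp ind a x (insertC c r z) + (((r : ℕ) : ℤ) + 1)) := by
      refine sg_odd_sub ?_
      rw [chainExp_insertC ind a x c r z, muOneExp,
        sum_gdeg_prefix ind x c (r : ℕ) (le_of_lt r.isLt), prevNode_eq]
      exact ⟨(l : ℤ) - (r : ℕ) - 1, by push_cast; ring⟩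
    rw [← hodd, sg_add, sg_add]
  calc ∑ c : Fin l → σ, P1 T φ a α x l c
      = ∑ c : Fin l → σ, ∑ r : Fin l, ∑ z : σ, -(W T φ a α x l r (insertC c r z)) :=
        Finset.sum_congr rfl fun c _ => hP1 c
    _ = ∑ r : Fin l, ∑ c : Fin l → σ, ∑ z : σ, -(W T φ a α x l r (insertC c r z)) :=
        Finset.sum_comm
    _ = ∑ r : Fin l, ∑ c' : Fin (l + 1) → σ, -(W T φ a α x l r c') := by
        refine Finset.sum_congr rfl fun r _ => ?_
        rw [← Equiv.sum_comp (insertEquiv r) (fun c' => -(W T φ a α x l r c')),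
          Fintype.sum_prod_type]
        rfl
    _ = - ∑ c' : Fin (l + 1) → σ, ∑ r : Fin l, W T φ a α x l r c' := by
        rw [Finset.sum_comm]
        simp only [Finset.sum_neg_distrib]
    _ = - ∑ c' : Fin (l + 1) → σ, P2 T φ a α x (l + 1) c' := by
        rw [Finset.sum_congr rfl fun c' _ => (hP2 c').symm]

end Cancel


section Key

variable {A M N : Type} [AddCommGroup A] [AddCommGroup M] [AddCommGroup N]
variable {σ : Type} [Fintype σ] [DecidableEq σ] {ind : σ → ℤ}
variable {Ω : DGA A}
variable (T : Twisting Ω σ ind) {𝓐 : AInfModule Ω M} {𝓑 : AInfModule Ω N}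
  (φ : AInfMorphism Ω 𝓐 𝓑)

lemma key (DA : (σ → M) →+ (σ → M)) (DB : (σ → N) →+ (σ → N)) (F : (σ → M) →+ (σ → N))
    (hDA : ∀ (a : ℤ) (α : M) (x : σ), α ∈ 𝓐.grade a →
      DA (Pi.single x α) = enrichedDSingle 𝓐 T a α x)
    (hDB : ∀ (b : ℤ) (β : N) (y : σ), β ∈ 𝓑.grade b →
      DB (Pi.single y β) = enrichedDSingle 𝓑 T b β y)
    (hF : ∀ (a : ℤ) (α : M) (x : σ), α ∈ 𝓐.grade a →
      F (Pi.single x α) = inducedSingle φ T a α x)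
    (a : ℤ) (α : M) (x : σ) (hα : α ∈ 𝓐.grade a) :
    DB (F (Pi.single x α)) = F (DA (Pi.single x α)) := by
  have hQ0 : (∑ c : Fin 0 → σ, P2 T φ a α x 0 c) = 0 :=
    Finset.sum_eq_zero fun c _ => P2_zero_len T φ a α x c
  have hQtop : (∑ c : Fin (2 * (Fintype.card σ + 1)) → σ,
      P2 T φ a α x (2 * (Fintype.card σ + 1)) c) = 0 :=
    Finset.sum_eq_zero fun c _ => P2_vanish_top T φ a α x c
  calc DB (F (Pi.single x α))
      = ∑ n ∈ range (Fintype.card σ + 1), ∑ z : Fin n → σ,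
          ∑ k ∈ range (Fintype.card σ + 1), ∑ w : Fin k → σ,
            Pi.single (lastNode (lastNode x z) w)
              (sg (chainExp ind a x z
                  + chainExp ind (bdeg ind a x z) (lastNode x z) w) •
                𝓑.ν k (φ.φ n α (chainLoops T x z)) (chainLoops T (lastNode x z) w)) :=
        expandLHS T φ DB F hDB hF a α x hα
    _ = ∑ n ∈ range (Fintype.card σ + 1), ∑ k ∈ range (Fintype.card σ + 1),
          ∑ c : Fin (n + k) → σ, ML T φ a α x (n + k) c ⟨n, by omega⟩ := by
        refine Finset.sum_congr rfl fun n _ => ?_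
        rw [Finset.sum_comm]
        exact Finset.sum_congr rfl fun k _ => reindexL T φ a α x n k
    _ = ∑ l ∈ range (2 * (Fintype.card σ + 1)), ∑ c : Fin l → σ,
          ∑ j : Fin (l + 1), ML T φ a α x l c j :=
        assemble (Fintype.card σ + 1) (ML T φ a α x)
          (fun l c j h => ML_vanish T φ a α x l c j h)
    _ = ∑ l ∈ range (2 * (Fintype.card σ + 1)), ∑ c : Fin l → σ,
          ((∑ j : Fin (l + 1), MR T φ a α x l c j)
            + P1 T φ a α x l c + P2 T φ a α x l c) :=
        Finset.sum_congr rfl fun l _ => Finset.sum_congr rfl fun c _ =>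
          relStep T φ a α x hα l c
    _ = (∑ l ∈ range (2 * (Fintype.card σ + 1)), ∑ c : Fin l → σ,
          ∑ j : Fin (l + 1), MR T φ a α x l c j)
        + ∑ l ∈ range (2 * (Fintype.card σ + 1)),
            ((∑ c : Fin l → σ, P1 T φ a α x l c)
              + ∑ c : Fin l → σ, P2 T φ a α x l c) := by
        simp only [Finset.sum_add_distrib]
        rw [add_assoc]
    _ = ∑ l ∈ range (2 * (Fintype.card σ + 1)), ∑ c : Fin l → σ,
          ∑ j : Fin (l + 1), MR T φ a α x l c j := by
        have hterm : ∀ l : ℕ,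
            ((∑ c : Fin l → σ, P1 T φ a α x l c)
              + ∑ c : Fin l → σ, P2 T φ a α x l c)
            = (fun m => ∑ c : Fin m → σ, P2 T φ a α x m c) l
              - (fun m => ∑ c : Fin m → σ, P2 T φ a α x m c) (l + 1) := by
          intro l
          rw [insertStep T φ a α x l]
          abel
        rw [Finset.sum_congr rfl fun l _ => hterm l,
          Finset.sum_range_sub' (fun m => ∑ c : Fin m → σ, P2 T φ a α x m c)
            (2 * (Fintype.card σ + 1))]
        rw [hQ0, hQtop]
        simp
    _ = ∑ n ∈ range (Fintype.card σ + 1), ∑ k ∈ range (Fintype.card σ + 1),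
          ∑ c : Fin (n + k) → σ, MR T φ a α x (n + k) c ⟨n, by omega⟩ :=
        (assemble (Fintype.card σ + 1) (MR T φ a α x)
          (fun l c j h => MR_vanish T φ a α x l c j h)).symm
    _ = ∑ n ∈ range (Fintype.card σ + 1), ∑ z : Fin n → σ,
          ∑ k ∈ range (Fintype.card σ + 1), ∑ w : Fin k → σ,
            Pi.single (lastNode (lastNode x z) w)
              (sg (chainExp ind a x z
                  + chainExp ind (bdeg ind a x z - 1) (lastNode x z) w) •
                φ.φ k (𝓐.ν n α (chainLoops T x z)) (chainLoops T (lastNode x z) w)) := by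
        refine Finset.sum_congr rfl fun n _ => ?_
        rw [Finset.sum_comm]
        exact Finset.sum_congr rfl fun k _ => (reindexR T φ a α x n k).symm
    _ = F (DA (Pi.single x α)) := (expandRHS T φ DA F hDA hF a α x hα).symm

end Key

end CSDGProof

open CSDG in
/-- Proposition B of the paper.
Let `X` be a pointed, oriented, closed, connected manifold, `Ξ` a set of DG Morse data
on `X` with Barraud–Cornea twisting cocycle `m` (abstracted here as a finite set `σ` of
critical points with index function `ind`, together with a twisting cocycle `T`
satisfying the Maurer–Cartan equation, over the cubical chain DGA `Ω = C_*(ΩX)`), and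
let `φ : (𝓐, ν^𝓐) → (𝓑, ν^𝓑)` be a morphism of `A∞`-modules over `C_*(ΩX)`.

Then the map `φ̃ = Σ_{n≥0} (φ_{n+1} ⊗ 1) ∘ m̃ⁿ : C_*(X, Ξ, 𝓐) → C_*(X, Ξ, 𝓑)` is a
morphism of chain complexes, i.e. `∂ ∘ φ̃ = φ̃ ∘ ∂` for the twisted differentials
`∂ = Σ_{n≥0} (ν_{n+1} ⊗ 1) ∘ m̃ⁿ` on each side.  (The additive maps `DA`, `DB`, `F`
below are, respectively, the two twisted differentials and the induced map `φ̃`,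
characterized by their values on homogeneous generators.) -/
theorem morphism_of_AInfModules_induces_chain_map
    {A M N : Type} [AddCommGroup A] [AddCommGroup M] [AddCommGroup N]
    (Ω : DGA A) (σ : Type) [Fintype σ] [DecidableEq σ] (ind : σ → ℤ)
    (T : Twisting Ω σ ind)
    (𝓐 : AInfModule Ω M) (𝓑 : AInfModule Ω N)
    (φ : AInfMorphism Ω 𝓐 𝓑)
    (DA : (σ → M) →+ (σ → M)) (DB : (σ → N) →+ (σ → N)) (F : (σ → M) →+ (σ → N))
    (hDA : ∀ (a : ℤ) (α : M) (x : σ), α ∈ 𝓐.grade a →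
      DA (Pi.single x α) = enrichedDSingle 𝓐 T a α x)
    (hDB : ∀ (b : ℤ) (β : N) (y : σ), β ∈ 𝓑.grade b →
      DB (Pi.single y β) = enrichedDSingle 𝓑 T b β y)
    (hF : ∀ (a : ℤ) (α : M) (x : σ), α ∈ 𝓐.grade a →
      F (Pi.single x α) = inducedSingle φ T a α x) :
    ∀ c : σ → M, DB (F c) = F (DA c) := by
  intro c
  have hkey : ∀ (x : σ) (m : M), DB (F (Pi.single x m)) = F (DA (Pi.single x m)) := by
    intro x m
    have hmem : m ∈ ⨆ i, 𝓐.grade i := by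
      rw [𝓐.internal.submodule_iSup_eq_top]
      trivial
    refine Submodule.iSup_induction 𝓐.grade
      (motive := fun m => DB (F (Pi.single x m)) = F (DA (Pi.single x m))) hmem ?_ ?_ ?_
    · intro a α hα
      exact CSDGProof.key T φ DA DB F hDA hDB hF a α x hα
    · show DB (F (Pi.single x (0 : M))) = F (DA (Pi.single x (0 : M)))
      rw [Pi.single_zero]
      simp
    · intro m1 m2 h1 h2
      rw [Pi.single_add]
      simp only [map_add]
      rw [h1, h2]
  calc DB (F c) = DB (F (∑ x : σ, Pi.single x (c x))) := by rw [Finset.univ_sum_single]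
    _ = ∑ x : σ, DB (F (Pi.single x (c x))) := by rw [map_sum, map_sum]
    _ = ∑ x : σ, F (DA (Pi.single x (c x))) :=
        Finset.sum_congr rfl fun x _ => hkey x (c x)
    _ = F (DA c) := by rw [← map_sum, ← map_sum, Finset.univ_sum_single]
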